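/- Let r ≥ s ≥ 1 be integers and f,g : {0,1}^n → ℕ. Then log₂( Σ_{x,y ∈ {0,1}^n} r^{a(x,y)} s^{d(x,y)} f(x) g(y) ) ≤ n( log₂(r+s) − s/r ) + ((r+s)/(2r)) [ log₂( Σ_x f(x)^{2r/(r+s)} ) + log₂( Σ_y g(y)^{2r/(r+s)} ) ]. -/

import Mathlib

open Finset Real

/-- Number of coordinates on which `x` and `y` agree. -/
def agree {n : ℕ} (x y : Fin n → Bool) : ℕ := (Finset.univ.filter (fun i => x i = y i)).card


/-- Step i: for nonpositive exponent `e` and `x ∈ (0,1)`, `2 ≤ (1+x)^e + (1-x)^e`. -/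
lemma step_i (e x : ℝ) (he : e ≤ 0) (hx0 : 0 < x) (hx1 : x < 1) :
    2 ≤ (1+x) ^ e + (1-x) ^ e := by
  have h1 : (0:ℝ) < 1 + x := by linarith
  have h2 : (0:ℝ) < 1 - x := by linarith
  have hA : (0:ℝ) < (1+x) ^ e := rpow_pos_of_pos h1 e
  have hB : (0:ℝ) < (1-x) ^ e := rpow_pos_of_pos h2 e
  have hprod : 1 ≤ (1+x) ^ e * (1-x) ^ e := by
    rw [← Real.mul_rpow h1.le h2.le]
    apply Real.one_le_rpow_of_pos_of_le_one_of_nonpos _ _ he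
    · nlinarith
    · nlinarith
  nlinarith [sq_nonneg ((1+x)^e - (1-x)^e), sq_nonneg ((1+x)^e + (1-x)^e - 2)]

/-- Step ii: for `q ∈ (0,1]` and `x ∈ [0,1]`, `2qx ≤ (1+x)^q - (1-x)^q`. -/
lemma step_ii (q x : ℝ) (hq0 : 0 < q) (hq1 : q ≤ 1) (hx0 : 0 ≤ x) (hx1 : x ≤ 1) :
    2*q*x ≤ (1+x) ^ q - (1-x) ^ q := by
  set g : ℝ → ℝ := fun t => (1+t) ^ q - (1-t) ^ q - 2*q*t with hg
  have hd : ∀ t ∈ Set.Ioo (0:ℝ) 1, HasDerivAt g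
      (q * (1+t) ^ (q-1) + q * (1-t) ^ (q-1) - 2*q) t := by
    intro t ht
    have h1 : (0:ℝ) < 1 + t := by linarith [ht.1]
    have h2 : (0:ℝ) < 1 - t := by linarith [ht.2]
    have d1 : HasDerivAt (fun u : ℝ => (1+u) ^ q) (q * (1+t) ^ (q-1)) t := by
      have := (Real.hasDerivAt_rpow_const (x := 1+t) (p := q) (Or.inl h1.ne')).comp t
        ((hasDerivAt_id t).const_add 1)
      simpa [Function.comp_def] using this
    have d2 : HasDerivAt (fun u : ℝ => (1-u) ^ q) (-(q * (1-t) ^ (q-1))) t := by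
      have := (Real.hasDerivAt_rpow_const (x := 1-t) (p := q) (Or.inl h2.ne')).comp t
        ((hasDerivAt_id t).const_sub 1)
      · simpa [Function.comp_def] using this
    have d3 : HasDerivAt (fun u : ℝ => 2*q*u) (2*q) t := by
      simpa using (hasDerivAt_id t).const_mul (2*q)
    have := (d1.sub d2).sub d3
    refine this.congr_deriv ?_
    ring
  have hcont : ContinuousOn g (Set.Icc 0 1) := by
    apply ContinuousOn.sub
    apply ContinuousOn.sub
    · intro t ht
      have h1 : (0:ℝ) < 1 + t := by have := ht.1; linarith
      exact ((Real.continuousAt_rpow_const (1+t) q (Or.inl h1.ne')).comp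
        (by fun_prop)).continuousWithinAt
    · intro t _
      exact ((Real.continuousAt_rpow_const (1-t) q (Or.inr hq0.le)).comp
        (by fun_prop)).continuousWithinAt
    · fun_prop
  have hmono : MonotoneOn g (Set.Icc 0 1) := by
    apply monotoneOn_of_deriv_nonneg (convex_Icc 0 1) hcont
    · intro t ht
      rw [interior_Icc] at ht
      exact ((hd t ht).differentiableAt).differentiableWithinAt
    · intro t ht
      rw [interior_Icc] at ht
      rw [(hd t ht).deriv]
      have := step_i (q-1) t (by linarith) ht.1 ht.2
      nlinarith
  have h0 : g 0 = 0 := by simp [hg]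
  have := hmono (Set.mem_Icc.2 ⟨le_refl 0, zero_le_one⟩) (Set.mem_Icc.2 ⟨hx0, hx1⟩) hx0
  rw [h0] at this
  simp only [hg] at this
  linarith


/-- The key series bound: for `p ∈ [1,2]`, `x ∈ [0,1]`:
`2 + p(p-1)x² ≤ (1+x)^p + (1-x)^p`. -/
lemma series_bound (p x : ℝ) (hp1 : 1 ≤ p) (hp2 : p ≤ 2) (hx0 : 0 ≤ x) (hx1 : x ≤ 1) :
    2 + p*(p-1)*x^2 ≤ (1+x) ^ p + (1-x) ^ p := by
  rcases eq_or_lt_of_le hp1 with rfl | hp1'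
  · rw [Real.rpow_one, Real.rpow_one]; ring_nf; linarith
  set h : ℝ → ℝ := fun t => (1+t) ^ p + (1-t) ^ p - 2 - p*(p-1)*t^2 with hh
  have hd : ∀ t ∈ Set.Ioo (0:ℝ) 1, HasDerivAt h
      (p * (1+t) ^ (p-1) - p * (1-t) ^ (p-1) - 2*(p*(p-1))*t) t := by
    intro t ht
    have h1 : (0:ℝ) < 1 + t := by linarith [ht.1]
    have h2 : (0:ℝ) < 1 - t := by linarith [ht.2]
    have d1 : HasDerivAt (fun u : ℝ => (1+u) ^ p) (p * (1+t) ^ (p-1)) t := by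
      have := (Real.hasDerivAt_rpow_const (x := 1+t) (p := p) (Or.inl h1.ne')).comp t
        ((hasDerivAt_id t).const_add 1)
      simpa [Function.comp_def] using this
    have d2 : HasDerivAt (fun u : ℝ => (1-u) ^ p) (-(p * (1-t) ^ (p-1))) t := by
      have := (Real.hasDerivAt_rpow_const (x := 1-t) (p := p) (Or.inl h2.ne')).comp t
        ((hasDerivAt_id t).const_sub 1)
      simpa [Function.comp_def] using this
    have d3 : HasDerivAt (fun u : ℝ => p*(p-1)*u^2) (2*(p*(p-1))*t) t := by
      have := ((hasDerivAt_pow 2 t).const_mul (p*(p-1)))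
      refine this.congr_deriv ?_
      push_cast
      ring
    have := ((d1.add d2).sub_const 2).sub d3
    refine this.congr_deriv ?_
    ring
  have hcont : ContinuousOn h (Set.Icc 0 1) := by
    apply ContinuousOn.sub
    apply ContinuousOn.sub
    apply ContinuousOn.add
    · intro t ht
      have h1 : (0:ℝ) < 1 + t := by have := ht.1; linarith
      exact ((Real.continuousAt_rpow_const (1+t) p (Or.inl h1.ne')).comp
        (by fun_prop)).continuousWithinAt
    · intro t _
      exact ((Real.continuousAt_rpow_const (1-t) p (Or.inr (by linarith))).comp
        (by fun_prop)).continuousWithinAt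
    · fun_prop
    · fun_prop
  have hmono : MonotoneOn h (Set.Icc 0 1) := by
    apply monotoneOn_of_deriv_nonneg (convex_Icc 0 1) hcont
    · intro t ht
      rw [interior_Icc] at ht
      exact ((hd t ht).differentiableAt).differentiableWithinAt
    · intro t ht
      rw [interior_Icc] at ht
      rw [(hd t ht).deriv]
      have := step_ii (p-1) t (by linarith) (by linarith) ht.1.le ht.2.le
      nlinarith
  have h0 : h 0 = 0 := by simp [hh]; norm_num
  have := hmono (Set.mem_Icc.2 ⟨le_refl 0, zero_le_one⟩) (Set.mem_Icc.2 ⟨hx0, hx1⟩) hx0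
  rw [h0] at this
  simp only [hh] at this
  linarith



lemma key2_aux (p a b : ℝ) (hp1 : 1 ≤ p) (hp2 : p ≤ 2) (hb : 0 ≤ b) (hba : b ≤ a) :
    ((a+b)/2)^2 + (p-1)*((a-b)/2)^2 ≤ ((a ^ p + b ^ p)/2) ^ (2/p) := by
  have hp0 : 0 < p := by linarith
  have ha : 0 ≤ a := hb.trans hba
  set u := (a+b)/2 with hu
  set v := (a-b)/2 with hv
  have hv0 : 0 ≤ v := by rw [hv]; linarith
  have hvu : v ≤ u := by rw [hu, hv]; linarith
  rcases eq_or_lt_of_le (hv0.trans hvu) with h0 | hupos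
  · have ha0 : a = 0 := by rw [hu] at h0; linarith
    have hb0 : b = 0 := by rw [hu] at h0; linarith
    subst ha0; subst hb0
    rw [Real.zero_rpow hp0.ne', hu, hv]
    norm_num
    exact Real.rpow_nonneg (le_refl 0) _
  · set x := v/u with hx
    have hx0 : 0 ≤ x := div_nonneg hv0 hupos.le
    have hx1 : x ≤ 1 := (div_le_one hupos).2 hvu
    have h1x : (0:ℝ) ≤ 1 + x := by linarith
    have h2x : (0:ℝ) ≤ 1 - x := by linarith
    have huva : u + v = a := by rw [hu, hv]; ring
    have huvb : u - v = b := by rw [hu, hv]; ring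
    have hax : u * (1 + x) = a := by rw [← huva, hx]; field_simp
    have hbx : u * (1 - x) = b := by rw [← huvb, hx]; field_simp
    have expand : (a ^ p + b ^ p)/2 = u ^ p * (((1+x) ^ p + (1-x) ^ p)/2) := by
      rw [← hax, ← hbx, Real.mul_rpow hupos.le h1x, Real.mul_rpow hupos.le h2x]
      ring
    have hqq : 0 ≤ p*(p-1)*x^2 :=
      mul_nonneg (mul_nonneg hp0.le (by linarith)) (sq_nonneg x)
    have hser := series_bound p x hp1 hp2 hx0 hx1
    have hstep : (1 + p*(p-1)*x^2/2) ≤ (((1+x) ^ p + (1-x) ^ p)/2) := by linarith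
    have hbern : 1 + (2/p) * (p*(p-1)*x^2/2) ≤ (1 + p*(p-1)*x^2/2) ^ (2/p) :=
      one_add_mul_self_le_rpow_one_add (by linarith) (by rw [le_div_iff₀ hp0]; linarith)
    have hmono : (1 + p*(p-1)*x^2/2) ^ (2/p) ≤ (((1+x) ^ p + (1-x) ^ p)/2) ^ (2/p) :=
      Real.rpow_le_rpow (by linarith) hstep (div_nonneg zero_le_two hp0.le)
    have e2 : 1 + (2/p) * (p*(p-1)*x^2/2) = 1 + (p-1)*x^2 := by field_simp
    have e3 : u^2 * (1 + (p-1)*x^2) = u^2 + (p-1)*v^2 := by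
      rw [hx]; field_simp
    have upow : (u ^ p) ^ ((2:ℝ)/p) = u^2 := by
      rw [← Real.rpow_mul hupos.le, show p * ((2:ℝ)/p) = 2 by field_simp, Real.rpow_two]
    calc u^2 + (p-1)*v^2 = u^2 * (1 + (p-1)*x^2) := e3.symm
    _ ≤ u^2 * ((1 + p*(p-1)*x^2/2) ^ (2/p)) := by
        apply mul_le_mul_of_nonneg_left _ (sq_nonneg u)
        calc 1 + (p-1)*x^2 = 1 + (2/p) * (p*(p-1)*x^2/2) := e2.symm
        _ ≤ _ := hbern
    _ ≤ u^2 * ((((1+x) ^ p + (1-x) ^ p)/2) ^ (2/p)) :=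
        mul_le_mul_of_nonneg_left hmono (sq_nonneg u)
    _ = (u ^ p) ^ ((2:ℝ)/p) * ((((1+x) ^ p + (1-x) ^ p)/2) ^ (2/p)) := by rw [upow]
    _ = ((a ^ p + b ^ p)/2) ^ (2/p) := by
        rw [expand, Real.mul_rpow (Real.rpow_nonneg hupos.le _) (by positivity)]

lemma key2 (p a b : ℝ) (hp1 : 1 ≤ p) (hp2 : p ≤ 2) (ha : 0 ≤ a) (hb : 0 ≤ b) :
    ((a+b)/2)^2 + (p-1)*((a-b)/2)^2 ≤ ((a ^ p + b ^ p)/2) ^ (2/p) := by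
  rcases le_total b a with hba | hab
  · exact key2_aux p a b hp1 hp2 hb hba
  · have := key2_aux p b a hp1 hp2 ha hab
    calc ((a+b)/2)^2 + (p-1)*((a-b)/2)^2 = ((b+a)/2)^2 + (p-1)*((b-a)/2)^2 := by ring
    _ ≤ ((b ^ p + a ^ p)/2) ^ (2/p) := this
    _ = ((a ^ p + b ^ p)/2) ^ (2/p) := by rw [add_comm (b ^ p)]

/-- Two-point two-function hypercontractivity. -/
lemma two_fn (ρ a b c d : ℝ) (hρ0 : 0 ≤ ρ) (hρ1 : ρ ≤ 1)
    (ha : 0 ≤ a) (hb : 0 ≤ b) (hc : 0 ≤ c) (hd : 0 ≤ d) :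
    (1+ρ)*(a*c+b*d) + (1-ρ)*(a*d+b*c)
      ≤ 4 * ((a ^ (1+ρ) + b ^ (1+ρ))/2) ^ (1/(1+ρ)) * ((c ^ (1+ρ) + d ^ (1+ρ))/2) ^ (1/(1+ρ)) := by
  set p := 1 + ρ with hp
  have hp1 : 1 ≤ p := by rw [hp]; linarith
  have hp0 : 0 < p := by linarith
  have hp2 : p ≤ 2 := by rw [hp]; linarith
  have h1 := key2 p a b hp1 hp2 ha hb
  have h2 := key2 p c d hp1 hp2 hc hd
  rw [show p - 1 = ρ by rw [hp]; ring] at h1 h2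
  set X := (a ^ p + b ^ p)/2 with hX
  set Y := (c ^ p + d ^ p)/2 with hY
  have hX0 : 0 ≤ X := by rw [hX]; positivity
  have hY0 : 0 ≤ Y := by rw [hY]; positivity
  have hXe : X ^ ((2:ℝ)/p) = (X ^ ((1:ℝ)/p))^2 := by
    rw [← Real.rpow_natCast (X ^ ((1:ℝ)/p)) 2, ← Real.rpow_mul hX0]
    congr 1
    push_cast
    ring
  have hYe : Y ^ ((2:ℝ)/p) = (Y ^ ((1:ℝ)/p))^2 := by
    rw [← Real.rpow_natCast (Y ^ ((1:ℝ)/p)) 2, ← Real.rpow_mul hY0]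
    congr 1
    push_cast
    ring
  rw [hXe] at h1; rw [hYe] at h2
  set u := (a+b)/2; set v := (a-b)/2; set w := (c+d)/2; set z := (c-d)/2
  set P := X ^ ((1:ℝ)/p) with hP
  set Q := Y ^ ((1:ℝ)/p) with hQ
  have hP0 : 0 ≤ P := Real.rpow_nonneg hX0 _
  have hQ0 : 0 ≤ Q := Real.rpow_nonneg hY0 _
  have key : u*w + ρ*(v*z) ≤ P * Q := by
    have hcs : (u*w + ρ*(v*z))^2 ≤ (u^2 + ρ*v^2) * (w^2 + ρ*z^2) := by
      nlinarith [mul_nonneg hρ0 (sq_nonneg (u*z - v*w)), sq_nonneg (u*w + ρ*(v*z))]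
    have h3 : (u*w + ρ*(v*z))^2 ≤ (P*Q)^2 := by
      calc (u*w + ρ*(v*z))^2 ≤ (u^2 + ρ*v^2) * (w^2 + ρ*z^2) := hcs
      _ ≤ P^2 * Q^2 := by
          apply mul_le_mul h1 h2 _ (sq_nonneg P)
          nlinarith [sq_nonneg w, sq_nonneg z, mul_nonneg hρ0 (sq_nonneg z)]
      _ = (P*Q)^2 := by ring
    calc u*w + ρ*(v*z) ≤ |u*w + ρ*(v*z)| := le_abs_self _
    _ = Real.sqrt ((u*w + ρ*(v*z))^2) := (Real.sqrt_sq_eq_abs _).symm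
    _ ≤ Real.sqrt ((P*Q)^2) := Real.sqrt_le_sqrt h3
    _ = |P*Q| := Real.sqrt_sq_eq_abs _
    _ = P*Q := abs_of_nonneg (mul_nonneg hP0 hQ0)
  have expand : (1+ρ)*(a*c+b*d) + (1-ρ)*(a*d+b*c) = 4*(u*w + ρ*(v*z)) := by
    simp only [u, v, w, z]; ring
  rw [expand]
  linarith [key]




lemma agree_le {n : ℕ} (x y : Fin n → Bool) : agree x y ≤ n := by
  have := Finset.card_filter_le (Finset.univ : Finset (Fin n)) (fun i => x i = y i)
  simpa [agree] using this

lemma agree_cons {n : ℕ} (x₀ y₀ : Bool) (x y : Fin n → Bool) :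
    agree (Fin.cons x₀ x) (Fin.cons y₀ y) = (if x₀ = y₀ then 1 else 0) + agree x y := by
  rw [agree, agree, Finset.card_filter, Finset.card_filter, Fin.sum_univ_succ]
  simp [Fin.cons_zero, Fin.cons_succ]

/-- The one-dimensional (Bool) step. -/
lemma bool_step (r s : ℕ) (hs1 : 1 ≤ s) (hsr : s ≤ r) (F G : Bool → ℝ)
    (hF : ∀ i, 0 ≤ F i) (hG : ∀ i, 0 ≤ G i) :
    (∑ x : Bool, ∑ y : Bool, (if x = y then (r:ℝ) else (s:ℝ)) * F x * G y)
      ≤ (((r:ℝ)+s) * 2 ^ (-((s:ℝ)/r)))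
        * (∑ x : Bool, F x ^ ((2*(r:ℝ))/((r:ℝ)+s))) ^ (((r:ℝ)+s)/(2*(r:ℝ)))
        * (∑ y : Bool, G y ^ ((2*(r:ℝ))/((r:ℝ)+s))) ^ (((r:ℝ)+s)/(2*(r:ℝ))) := by
  have hs0 : (0:ℝ) < s := by exact_mod_cast hs1
  have hr0 : (0:ℝ) < r := lt_of_lt_of_le hs0 (by exact_mod_cast hsr)
  have hrs0 : (0:ℝ) < (r:ℝ) + s := by linarith
  set ρ : ℝ := ((r:ℝ) - s)/((r:ℝ) + s) with hρ
  have hsr' : (s:ℝ) ≤ r := by exact_mod_cast hsr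
  have hρ0 : 0 ≤ ρ := div_nonneg (by linarith) hrs0.le
  have hρ1 : ρ ≤ 1 := by rw [hρ, div_le_one hrs0]; linarith
  have hp : 1 + ρ = (2*(r:ℝ))/((r:ℝ)+s) := by rw [hρ]; field_simp; ring
  set p : ℝ := (2*(r:ℝ))/((r:ℝ)+s) with hpdef
  have hp0 : 0 < p := by positivity
  have he : ((r:ℝ)+s)/(2*(r:ℝ)) = 1/p := by rw [hpdef]; field_simp
  have key := two_fn ρ (F true) (F false) (G true) (G false) hρ0 hρ1
    (hF true) (hF false) (hG true) (hG false)
  rw [hp] at key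
  -- multiply key by (r+s)/2
  have key2 : (r:ℝ)*(F true*G true + F false*G false) + (s:ℝ)*(F true*G false + F false*G true)
      ≤ 2*((r:ℝ)+s) * ((F true ^ p + F false ^ p)/2) ^ (1/p) * ((G true ^ p + G false ^ p)/2) ^ (1/p) := by
    have h2 := mul_le_mul_of_nonneg_left key (by positivity : (0:ℝ) ≤ ((r:ℝ)+s)/2)
    calc (r:ℝ)*(F true*G true + F false*G false) + (s:ℝ)*(F true*G false + F false*G true)
        = ((r:ℝ)+s)/2 * ((1+ρ)*(F true*G true + F false*G false) + (1-ρ)*(F true*G false + F false*G true)) := by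
          rw [hρ]; field_simp; ring
      _ ≤ ((r:ℝ)+s)/2 * (4 * ((F true ^ p + F false ^ p)/2) ^ (1/p) * ((G true ^ p + G false ^ p)/2) ^ (1/p)) := by
          rw [hp]; exact h2
      _ = 2*((r:ℝ)+s) * ((F true ^ p + F false ^ p)/2) ^ (1/p) * ((G true ^ p + G false ^ p)/2) ^ (1/p) := by ring
  have hXF : (0:ℝ) ≤ F true ^ p + F false ^ p :=
    add_nonneg (Real.rpow_nonneg (hF true) p) (Real.rpow_nonneg (hF false) p)
  have hXG : (0:ℝ) ≤ G true ^ p + G false ^ p :=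
    add_nonneg (Real.rpow_nonneg (hG true) p) (Real.rpow_nonneg (hG false) p)
  have hsplitF : ((F true ^ p + F false ^ p)/2) ^ (1/p)
      = (F true ^ p + F false ^ p) ^ (1/p) / 2 ^ ((1:ℝ)/p) :=
    Real.div_rpow hXF (by norm_num) _
  have hsplitG : ((G true ^ p + G false ^ p)/2) ^ (1/p)
      = (G true ^ p + G false ^ p) ^ (1/p) / 2 ^ ((1:ℝ)/p) :=
    Real.div_rpow hXG (by norm_num) _
  have hconst : 2*((r:ℝ)+s) / (2 ^ ((1:ℝ)/p) * 2 ^ ((1:ℝ)/p)) = ((r:ℝ)+s) * 2 ^ (-((s:ℝ)/r)) := by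
    rw [← Real.rpow_add two_pos]
    have h1 : (1:ℝ)/p + 1/p = 2/p := by ring
    rw [h1]
    rw [show (2:ℝ)*((r:ℝ)+s) = ((r:ℝ)+s) * 2^(1:ℝ) by rw [Real.rpow_one]; ring]
    rw [mul_div_assoc, ← Real.rpow_sub two_pos]
    congr 1
    rw [hpdef]
    field_simp
    ring
  have expand : (∑ x : Bool, ∑ y : Bool, (if x = y then (r:ℝ) else (s:ℝ)) * F x * G y)
      = (r:ℝ)*(F true*G true + F false*G false) + (s:ℝ)*(F true*G false + F false*G true) := by
    simp [Fintype.sum_bool]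
    ring
  have expandF : (∑ x : Bool, F x ^ p) = F true ^ p + F false ^ p := by simp [Fintype.sum_bool]
  have expandG : (∑ y : Bool, G y ^ p) = G true ^ p + G false ^ p := by simp [Fintype.sum_bool]
  rw [expand, he, expandF, expandG]
  calc (r:ℝ)*(F true*G true + F false*G false) + (s:ℝ)*(F true*G false + F false*G true)
      ≤ 2*((r:ℝ)+s) * ((F true ^ p + F false ^ p)/2) ^ (1/p) * ((G true ^ p + G false ^ p)/2) ^ (1/p) := key2
    _ = (2*((r:ℝ)+s) / (2 ^ ((1:ℝ)/p) * 2 ^ ((1:ℝ)/p)))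
        * (F true ^ p + F false ^ p) ^ (1/p) * (G true ^ p + G false ^ p) ^ (1/p) := by
        rw [hsplitF, hsplitG]; ring
    _ = (((r:ℝ)+s) * 2 ^ (-((s:ℝ)/r)))
        * (F true ^ p + F false ^ p) ^ (1/p) * (G true ^ p + G false ^ p) ^ (1/p) := by
        rw [hconst]

/-- Tensorized counting inequality. -/
lemma tensor (r s : ℕ) (hs1 : 1 ≤ s) (hsr : s ≤ r) :
    ∀ (n : ℕ) (f g : (Fin n → Bool) → ℝ), (∀ x, 0 ≤ f x) → (∀ y, 0 ≤ g y) →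
    (∑ x : Fin n → Bool, ∑ y : Fin n → Bool,
        (r:ℝ) ^ (agree x y) * (s:ℝ) ^ (n - agree x y) * f x * g y)
      ≤ (((r:ℝ)+s) * 2 ^ (-((s:ℝ)/r)))^n
        * (∑ x : Fin n → Bool, f x ^ ((2*(r:ℝ))/((r:ℝ)+s))) ^ (((r:ℝ)+s)/(2*(r:ℝ)))
        * (∑ y : Fin n → Bool, g y ^ ((2*(r:ℝ))/((r:ℝ)+s))) ^ (((r:ℝ)+s)/(2*(r:ℝ))) := by
  have hs0 : (0:ℝ) < s := by exact_mod_cast hs1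
  have hr0 : (0:ℝ) < r := lt_of_lt_of_le hs0 (by exact_mod_cast hsr)
  have hrs0 : (0:ℝ) < (r:ℝ) + s := by linarith
  set p : ℝ := (2*(r:ℝ))/((r:ℝ)+s) with hpdef
  set e : ℝ := ((r:ℝ)+s)/(2*(r:ℝ)) with hedef
  have hp0 : 0 < p := by positivity
  have he0 : 0 < e := by positivity
  have hpe : p * e = 1 := by rw [hpdef, hedef]; field_simp
  have hep : e * p = 1 := by rw [mul_comm]; exact hpe
  set C : ℝ := ((r:ℝ)+s) * 2 ^ (-((s:ℝ)/r)) with hCdef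
  have hC0 : 0 < C := by
    rw [hCdef]
    exact mul_pos hrs0 (Real.rpow_pos_of_pos two_pos _)
  intro n
  induction n with
  | zero =>
      intro f g hf hg
      have ha : ∀ x y : Fin 0 → Bool, agree x y = 0 := fun x y => Nat.le_zero.1 (agree_le x y)
      simp only [Fintype.sum_unique, ha, pow_zero, Nat.zero_sub, one_mul, Nat.sub_zero]
      refine le_of_eq ?_
      rw [← Real.rpow_mul (hf _), ← Real.rpow_mul (hg _), hpe, Real.rpow_one,
        Real.rpow_one]
  | succ n ih =>
      intro f g hf hg
      have sum_eq : ∀ (h : (Fin (n+1) → Bool) → ℝ), ∑ x : Fin (n+1) → Bool, h x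
          = ∑ x₀ : Bool, ∑ x' : Fin n → Bool, h (Fin.cons x₀ x') := by
        intro h
        rw [← Equiv.sum_comp (Fin.consEquiv (fun _ => Bool)) h, Fintype.sum_prod_type]
        rfl
      -- notation for the inner kernel
      set K : (Fin n → Bool) → (Fin n → Bool) → ℝ :=
        fun x y => (r:ℝ) ^ (agree x y) * (s:ℝ) ^ (n - agree x y) with hK
      have hterm : ∀ (x₀ y₀ : Bool) (x' y' : Fin n → Bool),
          (r:ℝ) ^ (agree (Fin.cons x₀ x') (Fin.cons y₀ y'))
            * (s:ℝ) ^ ((n+1) - agree (Fin.cons x₀ x') (Fin.cons y₀ y'))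
            * f (Fin.cons x₀ x') * g (Fin.cons y₀ y')
          = (if x₀ = y₀ then (r:ℝ) else (s:ℝ))
            * (K x' y' * f (Fin.cons x₀ x') * g (Fin.cons y₀ y')) := by
        intro x₀ y₀ x' y'
        rw [agree_cons]
        have hle := agree_le x' y'
        by_cases h : x₀ = y₀
        · simp only [h, if_true]
          rw [show 1 + agree x' y' = agree x' y' + 1 by ring, Nat.succ_sub_succ, pow_succ]
          rw [hK]
          ring
        · simp only [h, if_false]
          rw [zero_add, show (n+1) - agree x' y' = (n - agree x' y') + 1 from by omega, pow_succ]
          rw [hK]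
          ring
      -- inner norms
      set F : Bool → ℝ := fun x₀ => (∑ x' : Fin n → Bool, f (Fin.cons x₀ x') ^ p) ^ e with hFdef
      set G : Bool → ℝ := fun y₀ => (∑ y' : Fin n → Bool, g (Fin.cons y₀ y') ^ p) ^ e with hGdef
      have hFsum : ∀ x₀, 0 ≤ ∑ x' : Fin n → Bool, f (Fin.cons x₀ x') ^ p :=
        fun x₀ => Finset.sum_nonneg fun x' _ => Real.rpow_nonneg (hf _) p
      have hGsum : ∀ y₀, 0 ≤ ∑ y' : Fin n → Bool, g (Fin.cons y₀ y') ^ p :=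
        fun y₀ => Finset.sum_nonneg fun y' _ => Real.rpow_nonneg (hg _) p
      have hF0 : ∀ x₀, 0 ≤ F x₀ := fun x₀ => Real.rpow_nonneg (hFsum x₀) e
      have hG0 : ∀ y₀, 0 ≤ G y₀ := fun y₀ => Real.rpow_nonneg (hGsum y₀) e
      have wnn : ∀ x₀ y₀ : Bool, (0:ℝ) ≤ (if x₀ = y₀ then (r:ℝ) else (s:ℝ)) := by
        intro x₀ y₀
        split <;> positivity
      have FP : ∑ x₀ : Bool, F x₀ ^ p = ∑ x : Fin (n+1) → Bool, f x ^ p := by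
        rw [sum_eq (fun x => f x ^ p)]
        refine Finset.sum_congr rfl fun x₀ _ => ?_
        rw [hFdef]
        rw [← Real.rpow_mul (hFsum x₀), hep, Real.rpow_one]
      have GP : ∑ y₀ : Bool, G y₀ ^ p = ∑ y : Fin (n+1) → Bool, g y ^ p := by
        rw [sum_eq (fun y => g y ^ p)]
        refine Finset.sum_congr rfl fun y₀ _ => ?_
        rw [hGdef]
        rw [← Real.rpow_mul (hGsum y₀), hep, Real.rpow_one]
      calc (∑ x : Fin (n+1) → Bool, ∑ y : Fin (n+1) → Bool,
            (r:ℝ) ^ (agree x y) * (s:ℝ) ^ ((n+1) - agree x y) * f x * g y)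
          = ∑ x₀ : Bool, ∑ x' : Fin n → Bool, ∑ y₀ : Bool, ∑ y' : Fin n → Bool,
              (if x₀ = y₀ then (r:ℝ) else (s:ℝ))
                * (K x' y' * f (Fin.cons x₀ x') * g (Fin.cons y₀ y')) := by
            rw [sum_eq (fun x => ∑ y : Fin (n+1) → Bool,
              (r:ℝ) ^ (agree x y) * (s:ℝ) ^ ((n+1) - agree x y) * f x * g y)]
            refine Finset.sum_congr rfl fun x₀ _ => Finset.sum_congr rfl fun x' _ => ?_
            rw [sum_eq (fun y => (r:ℝ) ^ (agree (Fin.cons x₀ x') y)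
                  * (s:ℝ) ^ ((n+1) - agree (Fin.cons x₀ x') y) * f (Fin.cons x₀ x') * g y)]
            exact Finset.sum_congr rfl fun y₀ _ => Finset.sum_congr rfl fun y' _ =>
              hterm x₀ y₀ x' y'
        _ = ∑ x₀ : Bool, ∑ y₀ : Bool, (if x₀ = y₀ then (r:ℝ) else (s:ℝ))
              * ∑ x' : Fin n → Bool, ∑ y' : Fin n → Bool,
                  K x' y' * f (Fin.cons x₀ x') * g (Fin.cons y₀ y') := by
            refine Finset.sum_congr rfl fun x₀ _ => ?_
            rw [Finset.sum_comm]
            refine Finset.sum_congr rfl fun y₀ _ => ?_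
            rw [Finset.mul_sum]
            refine Finset.sum_congr rfl fun x' _ => ?_
            rw [Finset.mul_sum]
        _ ≤ ∑ x₀ : Bool, ∑ y₀ : Bool, (if x₀ = y₀ then (r:ℝ) else (s:ℝ))
              * (C^n * F x₀ * G y₀) := by
            refine Finset.sum_le_sum fun x₀ _ => Finset.sum_le_sum fun y₀ _ => ?_
            refine mul_le_mul_of_nonneg_left ?_ (wnn x₀ y₀)
            have := ih (fun x' => f (Fin.cons x₀ x')) (fun y' => g (Fin.cons y₀ y'))
              (fun x' => hf _) (fun y' => hg _)
            exact this
        _ = C^n * ∑ x₀ : Bool, ∑ y₀ : Bool, (if x₀ = y₀ then (r:ℝ) else (s:ℝ)) * F x₀ * G y₀ := by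
            rw [Finset.mul_sum]
            refine Finset.sum_congr rfl fun x₀ _ => ?_
            rw [Finset.mul_sum]
            refine Finset.sum_congr rfl fun y₀ _ => ?_
            ring
        _ ≤ C^n * (C * (∑ x₀ : Bool, F x₀ ^ p) ^ e * (∑ y₀ : Bool, G y₀ ^ p) ^ e) := by
            refine mul_le_mul_of_nonneg_left ?_ (pow_nonneg hC0.le n)
            have := bool_step r s hs1 hsr F G hF0 hG0
            calc ∑ x₀ : Bool, ∑ y₀ : Bool, (if x₀ = y₀ then (r:ℝ) else (s:ℝ)) * F x₀ * G y₀
                ≤ C * (∑ x₀ : Bool, F x₀ ^ p) ^ e * (∑ y₀ : Bool, G y₀ ^ p) ^ e := this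
              _ = C * (∑ x₀ : Bool, F x₀ ^ p) ^ e * (∑ y₀ : Bool, G y₀ ^ p) ^ e := rfl
        _ = C^(n+1) * (∑ x : Fin (n+1) → Bool, f x ^ p) ^ e
              * (∑ y : Fin (n+1) → Bool, g y ^ p) ^ e := by
            rw [FP, GP, pow_succ]
            ring

lemma logb_rpow'' (b x y : ℝ) (hx : 0 < x) : Real.logb b (x ^ y) = y * Real.logb b x := by
  rw [Real.logb, Real.log_rpow hx, Real.logb]
  ring

/-- The non-Boolean counting form of the hypercontractive inequality. -/
theorem counting_form_general (n : ℕ) (r s : ℕ) (hs : 1 ≤ s) (hrs : s ≤ r)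
    (f g : (Fin n → Bool) → ℕ) :
    Real.logb 2 (∑ x : Fin n → Bool, ∑ y : Fin n → Bool,
        (r:ℝ) ^ (agree x y) * (s:ℝ) ^ (n - agree x y) * f x * g y)
      ≤ n * (Real.logb 2 ((r:ℝ)+s) - (s:ℝ)/r)
        + (((r:ℝ)+s)/(2*r)) *
          (Real.logb 2 (∑ x : Fin n → Bool, (f x : ℝ) ^ ((2*(r:ℝ))/((r:ℝ)+s)))
            + Real.logb 2 (∑ y : Fin n → Bool, (g y : ℝ) ^ ((2*(r:ℝ))/((r:ℝ)+s)))) := by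
  have hs0 : (0:ℝ) < s := by exact_mod_cast hs
  have hsr' : (s:ℝ) ≤ r := by exact_mod_cast hrs
  have hr0 : (0:ℝ) < r := lt_of_lt_of_le hs0 hsr'
  have hrs0 : (0:ℝ) < (r:ℝ) + s := by linarith
  set p : ℝ := (2*(r:ℝ))/((r:ℝ)+s) with hpdef
  set e : ℝ := ((r:ℝ)+s)/(2*(r:ℝ)) with hedef
  have hp0 : 0 < p := by positivity
  have he0 : 0 < e := by positivity
  set C : ℝ := ((r:ℝ)+s) * 2 ^ (-((s:ℝ)/r)) with hCdef
  have hC0 : 0 < C := mul_pos hrs0 (Real.rpow_pos_of_pos two_pos _)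
  -- basic coefficient facts
  have hcoef : (0:ℝ) ≤ Real.logb 2 ((r:ℝ)+s) - (s:ℝ)/r := by
    have h1 : (1:ℝ) ≤ Real.logb 2 ((r:ℝ)+s) := by
      rw [show (1:ℝ) = Real.logb 2 2 by simp]
      have hr1 : (1:ℝ) ≤ r := by exact_mod_cast hs.trans hrs
      have hs1' : (1:ℝ) ≤ s := by exact_mod_cast hs
      apply Real.logb_le_logb_of_le one_lt_two (by norm_num)
      linarith
    have h2 : (s:ℝ)/r ≤ 1 := (div_le_one hr0).2 hsr'
    linarith
  have sum_rpow_nonneg : ∀ (h : (Fin n → Bool) → ℕ),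
      (0:ℝ) ≤ ∑ x : Fin n → Bool, (h x : ℝ) ^ p :=
    fun h => Finset.sum_nonneg fun x _ => Real.rpow_nonneg (Nat.cast_nonneg _) p
  have logb_sum_nonneg : ∀ (h : (Fin n → Bool) → ℕ),
      0 ≤ Real.logb 2 (∑ x : Fin n → Bool, (h x : ℝ) ^ p) := by
    intro h
    by_cases hz : ∀ x, h x = 0
    · have : (∑ x : Fin n → Bool, (h x : ℝ) ^ p) = 0 :=
        Finset.sum_eq_zero fun x _ => by
          rw [hz x]; push_cast; exact Real.zero_rpow hp0.ne'
      rw [this, Real.logb_zero]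
    · push_neg at hz
      obtain ⟨x₀, hx₀⟩ := hz
      have h1 : (1:ℝ) ≤ (h x₀ : ℝ) ^ p :=
        Real.one_le_rpow (by exact_mod_cast Nat.one_le_iff_ne_zero.2 hx₀) hp0.le
      have h2 : (1:ℝ) ≤ ∑ x : Fin n → Bool, (h x : ℝ) ^ p :=
        h1.trans (Finset.single_le_sum
          (fun x _ => Real.rpow_nonneg (Nat.cast_nonneg _) p) (Finset.mem_univ x₀))
      exact Real.logb_nonneg one_lt_two h2
  by_cases hfz : ∀ x, f x = 0
  · have hS : (∑ x : Fin n → Bool, ∑ y : Fin n → Bool,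
        (r:ℝ) ^ (agree x y) * (s:ℝ) ^ (n - agree x y) * f x * g y) = 0 :=
      Finset.sum_eq_zero fun x _ => Finset.sum_eq_zero fun y _ => by
        rw [hfz x]; push_cast; ring
    have hSf : (∑ x : Fin n → Bool, (f x : ℝ) ^ p) = 0 :=
      Finset.sum_eq_zero fun x _ => by
        rw [hfz x]; push_cast; exact Real.zero_rpow hp0.ne'
    rw [hS, hSf, Real.logb_zero, zero_add]
    have := logb_sum_nonneg g
    have hn : (0:ℝ) ≤ n := Nat.cast_nonneg n
    have := mul_nonneg hn hcoef
    have := mul_nonneg he0.le (logb_sum_nonneg g)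
    linarith
  · by_cases hgz : ∀ y, g y = 0
    · have hS : (∑ x : Fin n → Bool, ∑ y : Fin n → Bool,
          (r:ℝ) ^ (agree x y) * (s:ℝ) ^ (n - agree x y) * f x * g y) = 0 :=
        Finset.sum_eq_zero fun x _ => Finset.sum_eq_zero fun y _ => by
          rw [hgz y]; push_cast; ring
      have hSg : (∑ y : Fin n → Bool, (g y : ℝ) ^ p) = 0 :=
        Finset.sum_eq_zero fun y _ => by
          rw [hgz y]; push_cast; exact Real.zero_rpow hp0.ne'
      rw [hS, hSg, Real.logb_zero, add_zero]
      have hn : (0:ℝ) ≤ n := Nat.cast_nonneg n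
      have := mul_nonneg hn hcoef
      have := mul_nonneg he0.le (logb_sum_nonneg f)
      linarith
    · push_neg at hfz hgz
      obtain ⟨x₀, hx₀⟩ := hfz
      obtain ⟨y₀, hy₀⟩ := hgz
      have hf1 : (1:ℝ) ≤ f x₀ := by exact_mod_cast Nat.one_le_iff_ne_zero.2 hx₀
      have hg1 : (1:ℝ) ≤ g y₀ := by exact_mod_cast Nat.one_le_iff_ne_zero.2 hy₀
      have hSf1 : (1:ℝ) ≤ ∑ x : Fin n → Bool, (f x : ℝ) ^ p :=
        (Real.one_le_rpow hf1 hp0.le).trans (Finset.single_le_sum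
          (fun x _ => Real.rpow_nonneg (Nat.cast_nonneg _) p) (Finset.mem_univ x₀))
      have hSg1 : (1:ℝ) ≤ ∑ y : Fin n → Bool, (g y : ℝ) ^ p :=
        (Real.one_le_rpow hg1 hp0.le).trans (Finset.single_le_sum
          (fun y _ => Real.rpow_nonneg (Nat.cast_nonneg _) p) (Finset.mem_univ y₀))
      have hSf0 : (0:ℝ) < ∑ x : Fin n → Bool, (f x : ℝ) ^ p := lt_of_lt_of_le one_pos hSf1
      have hSg0 : (0:ℝ) < ∑ y : Fin n → Bool, (g y : ℝ) ^ p := lt_of_lt_of_le one_pos hSg1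
      have term_nonneg : ∀ x y : Fin n → Bool,
          (0:ℝ) ≤ (r:ℝ) ^ (agree x y) * (s:ℝ) ^ (n - agree x y) * f x * g y := by
        intro x y
        positivity
      have hS0 : (0:ℝ) < ∑ x : Fin n → Bool, ∑ y : Fin n → Bool,
          (r:ℝ) ^ (agree x y) * (s:ℝ) ^ (n - agree x y) * f x * g y := by
        apply Finset.sum_pos'
          (fun x _ => Finset.sum_nonneg fun y _ => term_nonneg x y)
        refine ⟨x₀, Finset.mem_univ x₀, Finset.sum_pos' (fun y _ => term_nonneg x₀ y)
          ⟨y₀, Finset.mem_univ y₀, ?_⟩⟩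
        exact mul_pos (mul_pos (mul_pos (pow_pos hr0 (agree x₀ y₀))
          (pow_pos hs0 (n - agree x₀ y₀))) (lt_of_lt_of_le one_pos hf1))
          (lt_of_lt_of_le one_pos hg1)
      have htensor := tensor r s hs hrs n (fun x => (f x : ℝ)) (fun y => (g y : ℝ))
        (fun x => Nat.cast_nonneg _) (fun y => Nat.cast_nonneg _)
      have hRHS0 : (0:ℝ) < C^n * (∑ x : Fin n → Bool, (f x : ℝ) ^ p) ^ e
          * (∑ y : Fin n → Bool, (g y : ℝ) ^ p) ^ e :=
        mul_pos (mul_pos (pow_pos hC0 n) (Real.rpow_pos_of_pos hSf0 e))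
          (Real.rpow_pos_of_pos hSg0 e)
      calc Real.logb 2 (∑ x : Fin n → Bool, ∑ y : Fin n → Bool,
            (r:ℝ) ^ (agree x y) * (s:ℝ) ^ (n - agree x y) * f x * g y)
          ≤ Real.logb 2 (C^n * (∑ x : Fin n → Bool, (f x : ℝ) ^ p) ^ e
              * (∑ y : Fin n → Bool, (g y : ℝ) ^ p) ^ e) :=
            (Real.logb_le_logb one_lt_two hS0 hRHS0).2 htensor
        _ = n * Real.logb 2 C + e * Real.logb 2 (∑ x : Fin n → Bool, (f x : ℝ) ^ p)
              + e * Real.logb 2 (∑ y : Fin n → Bool, (g y : ℝ) ^ p) := by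
            rw [Real.logb_mul (by positivity) (Real.rpow_pos_of_pos hSg0 e).ne',
              Real.logb_mul (pow_pos hC0 n).ne' (Real.rpow_pos_of_pos hSf0 e).ne',
              Real.logb_pow, logb_rpow'' 2 _ e hSf0, logb_rpow'' 2 _ e hSg0]
        _ = n * (Real.logb 2 ((r:ℝ)+s) - (s:ℝ)/r)
              + e * (Real.logb 2 (∑ x : Fin n → Bool, (f x : ℝ) ^ p)
                + Real.logb 2 (∑ y : Fin n → Bool, (g y : ℝ) ^ p)) := by
            have hlogC : Real.logb 2 C = Real.logb 2 ((r:ℝ)+s) - (s:ℝ)/r := by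
              rw [hCdef, Real.logb_mul hrs0.ne' (Real.rpow_pos_of_pos two_pos _).ne',
                Real.logb_rpow (by norm_num) (by norm_num)]
              ring
            rw [hlogC]
            ring
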